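/- For any a ≠ 0, the function u(r) = -sign(a)√(1/a² - r²) (whose graph is a half sphere of radius 1/|a|) satisfies: w = u' solves w'' + (w/r)' = (5w/(2(1+w²)))(w')² + (w³/(2r²))(3+w²) on (0, 1/|a|), with w(0) = 0 and w'(0) = a. -/

import Mathlib

open Real Set

/-- For `a ≠ 0`, the function `u(r) = -sign(a)√(1/a² - r²)`, whose graph
is a half sphere of radius `1/|a|`, satisfies: `w = u'` solves
`w'' + (w/r)' = (5w/(2(1+w²)))(w')² + (w³/(2r²))(3+w²)` on `(0, 1/|a|)`, with
`w(0) = 0` and `w'(0) = a`. -/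
theorem stmt_12 (a : ℝ) (ha : a ≠ 0) (u : ℝ → ℝ)
    (hu : ∀ r, u r = -Real.sign a * Real.sqrt (1 / a ^ 2 - r ^ 2)) :
    deriv u 0 = 0 ∧ deriv (deriv u) 0 = a ∧
      ∀ r ∈ Set.Ioo 0 (1 / |a|),
        deriv (deriv (deriv u)) r + deriv (fun t => deriv u t / t) r
          = 5 * deriv u r / (2 * (1 + (deriv u r) ^ 2)) * (deriv (deriv u) r) ^ 2
            + (deriv u r) ^ 3 / (2 * r ^ 2) * (3 + (deriv u r) ^ 2) := by
  set s : ℝ := Real.sign a with hs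
  set c : ℝ := 1 / a ^ 2 with hc
  have hcpos : 0 < c := by positivity
  have hs' : s = 1 ∨ s = -1 := by
    rcases ha.lt_or_gt with h | h
    · right; rw [hs, Real.sign_of_neg h]
    · left; rw [hs, Real.sign_of_pos h]
  have hufun : u = fun t => -s * Real.sqrt (c - t ^ 2) := funext hu
  have hinner : ∀ r : ℝ, HasDerivAt (fun t : ℝ => c - t ^ 2) (-(2 * r)) r := by
    intro r
    simpa using ((hasDerivAt_pow 2 r).const_sub c)
  have hsq : ∀ r : ℝ, r ^ 2 < c →
      HasDerivAt (fun t => Real.sqrt (c - t ^ 2)) (-(r / Real.sqrt (c - r ^ 2))) r := by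
    intro r hr
    have hne : c - r ^ 2 ≠ 0 := by nlinarith
    have := (Real.hasDerivAt_sqrt hne).comp r (hinner r)
    refine this.congr_deriv ?_
    field_simp
  have hx : ∀ r : ℝ, r ^ 2 < c → 0 < Real.sqrt (c - r ^ 2) := by
    intro r hr; exact Real.sqrt_pos.mpr (by nlinarith)
  have hx2 : ∀ r : ℝ, r ^ 2 < c → (Real.sqrt (c - r ^ 2)) ^ 2 = c - r ^ 2 := by
    intro r hr; exact Real.sq_sqrt (by nlinarith)
  have hdu : ∀ r : ℝ, r ^ 2 < c →
      HasDerivAt u (s * r / Real.sqrt (c - r ^ 2)) r := by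
    intro r hr
    rw [hufun]
    have := (hsq r hr).const_mul (-s)
    refine this.congr_deriv ?_
    ring
  have hU : IsOpen {r : ℝ | r ^ 2 < c} := isOpen_lt (by continuity) continuous_const
  have hw1 : ∀ r ∈ {r : ℝ | r ^ 2 < c}, deriv u r = s * r / Real.sqrt (c - r ^ 2) :=
    fun r hr => (hdu r hr).deriv
  have hg1 : ∀ r : ℝ, r ^ 2 < c →
      HasDerivAt (fun t => s * t / Real.sqrt (c - t ^ 2))
        (s * c / (Real.sqrt (c - r ^ 2)) ^ 3) r := by
    intro r hr
    have hxr := hx r hr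
    have := ((hasDerivAt_id r).const_mul s).div (hsq r hr) hxr.ne'
    refine this.congr_deriv ?_
    set x := Real.sqrt (c - r ^ 2) with hxdef
    have h2 : c = x ^ 2 + r ^ 2 := by
      have := hx2 r hr; rw [← hxdef] at this; linarith
    rw [h2]
    field_simp
    simp only [id]; ring
  have hg2 : ∀ r : ℝ, r ^ 2 < c →
      HasDerivAt (fun t => s * c / (Real.sqrt (c - t ^ 2)) ^ 3)
        (3 * s * c * r / (Real.sqrt (c - r ^ 2)) ^ 5) r := by
    intro r hr
    have hxr := hx r hr
    have hden : HasDerivAt (fun t => (Real.sqrt (c - t ^ 2)) ^ 3)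
        (3 * (Real.sqrt (c - r ^ 2)) ^ 2 * (-(r / Real.sqrt (c - r ^ 2)))) r := by
      exact ((hsq r hr).pow 3).congr_deriv (by norm_num)
    have := (hasDerivAt_const r (s * c)).div hden (by positivity)
    refine this.congr_deriv ?_
    set x := Real.sqrt (c - r ^ 2) with hxdef
    field_simp
    ring
  have hg4 : ∀ r : ℝ, r ^ 2 < c →
      HasDerivAt (fun t => s / Real.sqrt (c - t ^ 2))
        (s * r / (Real.sqrt (c - r ^ 2)) ^ 3) r := by
    intro r hr
    have hxr := hx r hr
    have := (hasDerivAt_const r s).div (hsq r hr) hxr.ne'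
    refine this.congr_deriv ?_
    set x := Real.sqrt (c - r ^ 2) with hxdef
    have h3 : 0 * x - s * -(r / x) = s * r / x := by ring
    rw [h3, div_div, show x * x ^ 2 = x ^ 3 by ring]
  have hw2 : ∀ r ∈ {r : ℝ | r ^ 2 < c},
      deriv (deriv u) r = s * c / (Real.sqrt (c - r ^ 2)) ^ 3 := by
    intro r hr
    have heq : deriv u =ᶠ[nhds r] fun t => s * t / Real.sqrt (c - t ^ 2) :=
      Filter.eventuallyEq_of_mem (hU.mem_nhds hr) hw1
    rw [heq.deriv_eq]
    exact (hg1 r hr).deriv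
  have hw3 : ∀ r ∈ {r : ℝ | r ^ 2 < c},
      deriv (deriv (deriv u)) r = 3 * s * c * r / (Real.sqrt (c - r ^ 2)) ^ 5 := by
    intro r hr
    have heq : deriv (deriv u) =ᶠ[nhds r] fun t => s * c / (Real.sqrt (c - t ^ 2)) ^ 3 :=
      Filter.eventuallyEq_of_mem (hU.mem_nhds hr) hw2
    rw [heq.deriv_eq]
    exact (hg2 r hr).deriv
  have hsqc : Real.sqrt c = 1 / |a| := by
    rw [hc, show (1:ℝ) / a ^ 2 = (1 / |a|) ^ 2 by rw [div_pow, one_pow, sq_abs],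
      Real.sqrt_sq (by positivity)]
  have h0mem : (0:ℝ) ∈ {r : ℝ | r ^ 2 < c} := by simpa using hcpos
  refine ⟨?_, ?_, ?_⟩
  · rw [hw1 0 h0mem]; simp
  · rw [hw2 0 h0mem]
    norm_num
    rw [hsqc, hc]
    rcases ha.lt_or_gt with h | h
    · rcases hs' with h1 | h1
      · exfalso; rw [hs, Real.sign_of_neg h] at h1; norm_num at h1
      · rw [h1, abs_of_neg h]; field_simp
    · rcases hs' with h1 | h1
      · rw [h1, abs_of_pos h]; field_simp
      · exfalso; rw [hs, Real.sign_of_pos h] at h1; norm_num at h1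
  · intro r hr
    have hrpos : 0 < r := hr.1
    have hrmem : r ∈ {r : ℝ | r ^ 2 < c} := by
      have h2 : r < 1 / |a| := hr.2
      have h1 : r ^ 2 < (1 / |a|) ^ 2 := by nlinarith
      simpa [hc, div_pow, sq_abs] using h1
    have hVopen : IsOpen ({r : ℝ | r ^ 2 < c} ∩ Ioi 0) := hU.inter isOpen_Ioi
    have hVmem : r ∈ {r : ℝ | r ^ 2 < c} ∩ Ioi 0 := ⟨hrmem, hrpos⟩
    have hwt : deriv (fun t => deriv u t / t) r = s * r / (Real.sqrt (c - r ^ 2)) ^ 3 := by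
      have heq : (fun t => deriv u t / t) =ᶠ[nhds r] fun t => s / Real.sqrt (c - t ^ 2) := by
        refine Filter.eventuallyEq_of_mem (hVopen.mem_nhds hVmem) ?_
        intro t ht
        have htpos : (0:ℝ) < t := ht.2
        show deriv u t / t = s / Real.sqrt (c - t ^ 2)
        rw [hw1 t ht.1, div_div, mul_comm (Real.sqrt (c - t ^ 2)) t, mul_comm s t,
          mul_div_mul_left _ _ htpos.ne']
      rw [heq.deriv_eq]
      exact (hg4 r hrmem).deriv
    rw [hw1 r hrmem, hw2 r hrmem, hw3 r hrmem, hwt]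
    set x := Real.sqrt (c - r ^ 2) with hxdef
    have hxpos : 0 < x := hx r hrmem
    have hcx : c = x ^ 2 + r ^ 2 := by
      have := hx2 r hrmem; rw [← hxdef] at this; linarith
    rw [hcx]
    rcases hs' with h1 | h1 <;> rw [h1] <;>
      · have hden : (0:ℝ) < x ^ 2 + r ^ 2 := by positivity
        field_simp
        ring
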